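/- Let Ω be an open subset of ℝ^P and let F : Ω → ℝ^{M×N} be entrywise C² with the columns of F(x) spanning ℝ^M for every x ∈ Ω. Define Π(x) := I − Fᵀ(x)(F(x)Fᵀ(x))⁻¹F(x), Π_p(x) := Fᵀ(x)(F(x)Fᵀ(x))⁻¹ (∂F/∂x_p)(x), and Π_{q,p}(x) := Fᵀ(x)(F(x)Fᵀ(x))⁻¹ (∂²F/∂x_q∂x_p)(x). Then for all p, q = 1,…,P and every x ∈ Ω, ∂Π_p/∂x_q(x) = Π(x)Π_q(x)ᵀΠ_p(x) + Π_{q,p}(x) − Π_q(x)Π_p(x). -/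

import Mathlib

open Matrix

/-- Entrywise partial derivative of a matrix-valued function with respect to the `p`-th
coordinate. -/
noncomputable def matPartialDeriv {P M N : ℕ} (F : (Fin P → ℝ) → Matrix (Fin M) (Fin N) ℝ)
    (p : Fin P) (x : Fin P → ℝ) : Matrix (Fin M) (Fin N) ℝ :=
  Matrix.of fun i j => fderiv ℝ (fun y => F y i j) x (Pi.single p 1)

/-- `Π(x) := I − Fᵀ(x)(F(x)Fᵀ(x))⁻¹F(x)`. -/
noncomputable def projMat {P M N : ℕ} (F : (Fin P → ℝ) → Matrix (Fin M) (Fin N) ℝ)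
    (x : Fin P → ℝ) : Matrix (Fin N) (Fin N) ℝ :=
  1 - (F x)ᵀ * (F x * (F x)ᵀ)⁻¹ * F x

/-- `Π_p(x) := Fᵀ(x)(F(x)Fᵀ(x))⁻¹ (∂F/∂x_p)(x)`. -/
noncomputable def projMatP {P M N : ℕ} (F : (Fin P → ℝ) → Matrix (Fin M) (Fin N) ℝ)
    (p : Fin P) (x : Fin P → ℝ) : Matrix (Fin N) (Fin N) ℝ :=
  (F x)ᵀ * (F x * (F x)ᵀ)⁻¹ * matPartialDeriv F p x

/-- `Π_{q,p}(x) := Fᵀ(x)(F(x)Fᵀ(x))⁻¹ (∂²F/∂x_q∂x_p)(x)`. -/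
noncomputable def projMatQP {P M N : ℕ} (F : (Fin P → ℝ) → Matrix (Fin M) (Fin N) ℝ)
    (q p : Fin P) (x : Fin P → ℝ) : Matrix (Fin N) (Fin N) ℝ :=
  (F x)ᵀ * (F x * (F x)ᵀ)⁻¹ * matPartialDeriv (matPartialDeriv F p) q x

section Aux

variable {P : ℕ}

/-- Entries of a product of entrywise differentiable matrix functions are differentiable. -/
lemma diffAt_mul_entries {M N K : ℕ} {A : (Fin P → ℝ) → Matrix (Fin M) (Fin N) ℝ}
    {B : (Fin P → ℝ) → Matrix (Fin N) (Fin K) ℝ} {x : Fin P → ℝ}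
    (hA : ∀ i j, DifferentiableAt ℝ (fun y => A y i j) x)
    (hB : ∀ i j, DifferentiableAt ℝ (fun y => B y i j) x) :
    ∀ i j, DifferentiableAt ℝ (fun y => (A y * B y) i j) x := by
  intro i j
  have : (fun y => (A y * B y) i j) = fun y => ∑ k, A y i k * B y k j := by
    funext y; simp [Matrix.mul_apply]
  rw [this]
  exact DifferentiableAt.fun_sum fun k _ => (hA i k).mul (hB k j)

/-- Product rule for the entrywise partial derivative. -/
lemma matPD_mul {M N K : ℕ} {A : (Fin P → ℝ) → Matrix (Fin M) (Fin N) ℝ}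
    {B : (Fin P → ℝ) → Matrix (Fin N) (Fin K) ℝ} {x : Fin P → ℝ}
    (hA : ∀ i j, DifferentiableAt ℝ (fun y => A y i j) x)
    (hB : ∀ i j, DifferentiableAt ℝ (fun y => B y i j) x) (q : Fin P) :
    matPartialDeriv (fun y => A y * B y) q x
      = matPartialDeriv A q x * B x + A x * matPartialDeriv B q x := by
  ext i j
  have h1 : (fun y => (A y * B y) i j) = fun y => ∑ k, A y i k * B y k j := by
    funext y; simp [Matrix.mul_apply]
  simp only [matPartialDeriv, Matrix.of_apply, Matrix.add_apply, Matrix.mul_apply, h1]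
  rw [fderiv_fun_sum (fun k _ => (hA i k).fun_mul (hB k j))]
  simp only [ContinuousLinearMap.coe_sum', Finset.sum_apply]
  rw [← Finset.sum_add_distrib]
  congr 1
  funext k
  rw [fderiv_fun_mul (hA i k) (hB k j)]
  simp only [ContinuousLinearMap.add_apply, ContinuousLinearMap.smul_apply, smul_eq_mul]
  ring

lemma matPD_transpose {M N : ℕ} (A : (Fin P → ℝ) → Matrix (Fin M) (Fin N) ℝ)
    (q : Fin P) (x : Fin P → ℝ) :
    matPartialDeriv (fun y => (A y)ᵀ) q x = (matPartialDeriv A q x)ᵀ := rfl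

/-- Differentiability of the determinant of an entrywise differentiable matrix function. -/
lemma diffAt_det {n : ℕ} {A : (Fin P → ℝ) → Matrix (Fin n) (Fin n) ℝ} {x : Fin P → ℝ}
    (hA : ∀ i j, DifferentiableAt ℝ (fun y => A y i j) x) :
    DifferentiableAt ℝ (fun y => (A y).det) x := by
  have h : (fun y => (A y).det)
      = fun y => ∑ σ : Equiv.Perm (Fin n),
          ((Equiv.Perm.sign σ : ℤ) : ℝ) * ∏ i, A y (σ i) i := by
    funext y
    rw [Matrix.det_apply]
    congr 1
    funext σ
    rw [Units.smul_def, zsmul_eq_mul]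
  rw [h]
  refine DifferentiableAt.fun_sum fun σ _ => DifferentiableAt.const_mul ?_ _
  exact (HasFDerivAt.finset_prod fun i _ => (hA (σ i) i).hasFDerivAt).differentiableAt

/-- Differentiability of the entries of the inverse of an entrywise differentiable
matrix function at a point where the determinant is nonzero. -/
lemma diffAt_inv_entries {n : ℕ} {A : (Fin P → ℝ) → Matrix (Fin n) (Fin n) ℝ} {x : Fin P → ℝ}
    (hA : ∀ i j, DifferentiableAt ℝ (fun y => A y i j) x) (hdet : (A x).det ≠ 0) :
    ∀ i j, DifferentiableAt ℝ (fun y => (A y)⁻¹ i j) x := by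
  intro i j
  have h : (fun y => (A y)⁻¹ i j)
      = fun y => ((A y).det)⁻¹ * ((A y).updateRow j (Pi.single i 1)).det := by
    funext y
    rw [Matrix.inv_def, Matrix.smul_apply, Ring.inverse_eq_inv, Matrix.adjugate_apply,
      smul_eq_mul]
  rw [h]
  refine DifferentiableAt.mul ((diffAt_det hA).inv hdet) (diffAt_det ?_)
  intro k l
  by_cases hk : k = j
  · simp [Matrix.updateRow_apply, hk]
  · simpa [Matrix.updateRow_apply, hk] using hA k l

end Aux

/-- If `F : Ω → ℝ^{M×N}` is entrywise `C²` on an open `Ω ⊆ ℝ^P` with the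
columns of `F(x)` spanning `ℝ^M` for all `x ∈ Ω`, then
`∂Π_p/∂x_q(x) = Π(x)Π_q(x)ᵀΠ_p(x) + Π_{q,p}(x) − Π_q(x)Π_p(x)` for all `p, q` and `x ∈ Ω`. -/
theorem stmt5 {P M N : ℕ} {Ω : Set (Fin P → ℝ)} (hΩ : IsOpen Ω)
    (F : (Fin P → ℝ) → Matrix (Fin M) (Fin N) ℝ)
    (hF : ∀ i j, ContDiffOn ℝ 2 (fun x => F x i j) Ω)
    (hspan : ∀ x ∈ Ω,
      Submodule.span ℝ (Set.range (fun n : Fin N => fun m : Fin M => F x m n)) = ⊤) :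
    ∀ x ∈ Ω, ∀ p q : Fin P,
      matPartialDeriv (projMatP F p) q x
        = projMat F x * (projMatP F q x)ᵀ * projMatP F p x
          + projMatQP F q p x - projMatP F q x * projMatP F p x := by
  intro x hx p q
  -- determinant nonzero everywhere on Ω
  have hdet : ∀ y ∈ Ω, (F y * (F y)ᵀ).det ≠ 0 := by
    intro y hy hd
    obtain ⟨v, hv0, hv⟩ := (Matrix.exists_mulVec_eq_zero_iff).2 hd
    have h1 : (F y)ᵀ *ᵥ v = 0 := by
      have h2 : v ⬝ᵥ (F y * (F y)ᵀ) *ᵥ v = 0 := by rw [hv, dotProduct_zero]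
      rw [← Matrix.mulVec_mulVec, Matrix.dotProduct_mulVec, ← Matrix.mulVec_transpose] at h2
      exact dotProduct_self_eq_zero.1 h2
    apply hv0
    have hvmem : v ∈ Submodule.span ℝ
        (Set.range (fun n : Fin N => fun m : Fin M => F y m n)) := by
      rw [hspan y hy]; trivial
    have hdp : v ⬝ᵥ v = 0 := by
      refine Submodule.span_induction (p := fun w _ => w ⬝ᵥ v = 0) ?_ ?_ ?_ ?_ hvmem
      · rintro w ⟨n, rfl⟩
        have h := congrFun h1 n
        simpa [Matrix.mulVec, dotProduct] using h
      · simp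
      · intro a b _ _ ha hb
        simp [add_dotProduct, ha, hb]
      · intro c a _ ha
        simp [smul_dotProduct, ha]
    exact dotProduct_self_eq_zero.1 hdp
  -- differentiability facts
  have hxnhds : Ω ∈ nhds x := hΩ.mem_nhds hx
  have hFd : ∀ i j, DifferentiableAt ℝ (fun y => F y i j) x := fun i j =>
    ((hF i j).differentiableOn (by norm_num)).differentiableAt hxnhds
  have hFpd : ∀ (r : Fin P) (i : Fin M) (j : Fin N),
      DifferentiableAt ℝ (fun y => matPartialDeriv F r y i j) x := by
    intro r i j
    have h1 : ContDiffOn ℝ 1 (fderiv ℝ (fun y => F y i j)) Ω :=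
      (hF i j).fderiv_of_isOpen hΩ (by norm_num)
    have h2 : ContDiffOn ℝ 1 (fun y => fderiv ℝ (fun z => F z i j) y (Pi.single r 1)) Ω :=
      h1.clm_apply contDiffOn_const
    exact (h2.differentiableOn (by norm_num)).differentiableAt hxnhds
  have hFtd : ∀ (i : Fin N) (j : Fin M), DifferentiableAt ℝ (fun y => (F y)ᵀ i j) x :=
    fun i j => hFd j i
  set G : (Fin P → ℝ) → Matrix (Fin M) (Fin M) ℝ := fun y => F y * (F y)ᵀ with hG
  have hGd : ∀ i j, DifferentiableAt ℝ (fun y => G y i j) x :=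
    diffAt_mul_entries hFd hFtd
  have hGid : ∀ i j, DifferentiableAt ℝ (fun y => (G y)⁻¹ i j) x :=
    diffAt_inv_entries hGd (hdet x hx)
  have hGiGd : ∀ i j, DifferentiableAt ℝ (fun y => ((F y)ᵀ * (G y)⁻¹) i j) x :=
    diffAt_mul_entries hFtd hGid
  -- abbreviations at the point x
  set A := F x with hA
  set Gi := (G x)⁻¹ with hGi
  set Fp := matPartialDeriv F p x with hFp
  set Fq := matPartialDeriv F q x with hFq
  set Fqp := matPartialDeriv (matPartialDeriv F p) q x with hFqp
  have hGunit : IsUnit (G x).det := isUnit_iff_ne_zero.2 (hdet x hx)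
  have hGGi : G x * Gi = 1 := Matrix.mul_nonsing_inv _ hGunit
  have hGiG : Gi * G x = 1 := Matrix.nonsing_inv_mul _ hGunit
  -- derivative of G
  have hDG : matPartialDeriv G q x = Fq * Aᵀ + A * Fqᵀ := by
    rw [hG]
    rw [matPD_mul hFd hFtd q, matPD_transpose]
  -- derivative of G⁻¹
  have hDGi : matPartialDeriv (fun y => (G y)⁻¹) q x = -(Gi * (Fq * Aᵀ + A * Fqᵀ) * Gi) := by
    have hzero : matPartialDeriv (fun y => G y * (G y)⁻¹) q x = 0 := by
      ext i j
      have hev : (fun y => (G y * (G y)⁻¹) i j) =ᶠ[nhds x] fun _ => (1 : Matrix (Fin M) (Fin M) ℝ) i j := by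
        filter_upwards [hxnhds] with y hy
        rw [Matrix.mul_nonsing_inv _ (isUnit_iff_ne_zero.2 (hdet y hy))]
      simp only [matPartialDeriv, Matrix.of_apply, Matrix.zero_apply]
      rw [hev.fderiv_eq, fderiv_fun_const]
      simp
    rw [matPD_mul hGd hGid q] at hzero
    have h3 : G x * matPartialDeriv (fun y => (G y)⁻¹) q x = -(matPartialDeriv G q x * Gi) := by
      rw [eq_neg_iff_add_eq_zero, add_comm]; exact hzero
    have h4 : Gi * (G x * matPartialDeriv (fun y => (G y)⁻¹) q x)
        = Gi * -(matPartialDeriv G q x * Gi) := by rw [h3]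
    rw [← Matrix.mul_assoc, hGiG, Matrix.one_mul] at h4
    rw [h4, hDG, Matrix.mul_neg, Matrix.mul_assoc]
  -- derivative of Fᵀ * G⁻¹
  have hDFtGi : matPartialDeriv (fun y => (F y)ᵀ * (G y)⁻¹) q x
      = Fqᵀ * Gi + Aᵀ * -(Gi * (Fq * Aᵀ + A * Fqᵀ) * Gi) := by
    rw [matPD_mul hFtd hGid q, matPD_transpose, hDGi]
  -- derivative of Π_p
  have hprojeq : projMatP F p = fun y => ((F y)ᵀ * (G y)⁻¹) * matPartialDeriv F p y := rfl
  have hmain : matPartialDeriv (projMatP F p) q x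
      = (Fqᵀ * Gi + Aᵀ * -(Gi * (Fq * Aᵀ + A * Fqᵀ) * Gi)) * Fp + (Aᵀ * Gi) * Fqp := by
    rw [hprojeq, matPD_mul hGiGd (hFpd p) q, hDFtGi]
  -- symmetry of Gi
  have hGsymm : (G x)ᵀ = G x := by
    show (F x * (F x)ᵀ)ᵀ = F x * (F x)ᵀ
    rw [Matrix.transpose_mul, Matrix.transpose_transpose]
  have hGit : Giᵀ = Gi := by
    show ((G x)⁻¹)ᵀ = (G x)⁻¹
    rw [Matrix.transpose_nonsing_inv, hGsymm]
  -- unfold the right-hand side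
  have hrhs1 : projMat F x = 1 - Aᵀ * Gi * A := rfl
  have hrhs2 : projMatP F q x = Aᵀ * Gi * Fq := rfl
  have hrhs3 : projMatP F p x = Aᵀ * Gi * Fp := rfl
  have hrhs4 : projMatQP F q p x = Aᵀ * Gi * Fqp := rfl
  rw [hmain, hrhs1, hrhs2, hrhs3, hrhs4]
  have hqT : (Aᵀ * Gi * Fq)ᵀ = Fqᵀ * Gi * A := by
    rw [Matrix.transpose_mul, Matrix.transpose_mul, Matrix.transpose_transpose, hGit,
      Matrix.mul_assoc]
  rw [hqT]
  -- key collapsing identity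
  have key : ∀ (Z : Matrix (Fin M) (Fin N) ℝ), A * (Aᵀ * (Gi * Z)) = Z := by
    intro Z
    have h1 : A * Aᵀ * Gi = (1 : Matrix (Fin M) (Fin M) ℝ) := hGGi
    rw [← Matrix.mul_assoc, ← Matrix.mul_assoc, h1, Matrix.one_mul]
  simp only [Matrix.sub_mul, Matrix.mul_sub, Matrix.add_mul, Matrix.mul_add,
    Matrix.neg_mul, Matrix.mul_neg, Matrix.one_mul, Matrix.mul_one, Matrix.mul_assoc, key]
  abel
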